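/- For every FLIF expression α, every instance D, and (ν₁, ν₂) ∈ ⟦α⟧_D: if ν₁′ agrees with ν₁ on vars(α), and ν₂′ agrees with ν₂ on vars(α) and agrees with ν₁′ outside vars(α), then (ν₁′, ν₂′) ∈ ⟦α⟧_D. (Free variable property / cylindricity outside the variables of α.) -/
import Mathlib


/-- FLIF expressions over relation names `ρ`, variables `V`, and domain `D`. -/
inductive FLIF (ρ V D : Type) : Type
  | rel (R : ρ) (xs ys : List V)
  | eqVar (x y : V)
  | eqConst (x : V) (c : D)
  | assignVar (x y : V)
  | assignConst (x : V) (c : D)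
  | comp (a b : FLIF ρ V D)
  | union (a b : FLIF ρ V D)
  | diff (a b : FLIF ρ V D)

namespace FLIF

variable {ρ V D : Type}

/-- Dynamic semantics of FLIF: a binary relation on valuations `V → D`,
given a database instance `I` assigning to each relation name a set of tuples. -/
def sem (I : ρ → Set (List D)) [DecidableEq V] : FLIF ρ V D → (V → D) → (V → D) → Prop
  | rel R xs ys, ν₁, ν₂ =>
      (xs.map ν₁ ++ ys.map ν₂) ∈ I R ∧ ∀ v : V, v ∉ ys → ν₁ v = ν₂ v
  | eqVar x y, ν₁, ν₂ => ν₁ = ν₂ ∧ ν₁ x = ν₁ y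
  | eqConst x c, ν₁, ν₂ => ν₁ = ν₂ ∧ ν₁ x = c
  | assignVar x y, ν₁, ν₂ => ν₂ = Function.update ν₁ x (ν₁ y)
  | assignConst x c, ν₁, ν₂ => ν₂ = Function.update ν₁ x c
  | comp a b, ν₁, ν₂ => ∃ ν, sem I a ν₁ ν ∧ sem I b ν ν₂
  | union a b, ν₁, ν₂ => sem I a ν₁ ν₂ ∨ sem I b ν₁ ν₂
  | diff a b, ν₁, ν₂ => sem I a ν₁ ν₂ ∧ ¬ sem I b ν₁ ν₂

variable [DecidableEq V]

/-- Syntactic output variables `O(α)`. -/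
def outs : FLIF ρ V D → Finset V
  | rel _ _ ys => ys.toFinset
  | eqVar _ _ => ∅
  | eqConst _ _ => ∅
  | assignVar x _ => {x}
  | assignConst x _ => {x}
  | comp a b => outs a ∪ outs b
  | union a b => outs a ∪ outs b
  | diff a _ => outs a

/-- Syntactic input variables `I(α)`. -/
def inps : FLIF ρ V D → Finset V
  | rel _ xs _ => xs.toFinset
  | eqVar x y => {x, y}
  | eqConst x _ => {x}
  | assignVar _ y => {y}
  | assignConst _ _ => ∅
  | comp a b => inps a ∪ (inps b \ outs a)
  | union a b => inps a ∪ inps b ∪ symmDiff (outs a) (outs b)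
  | diff a b => inps a ∪ inps b ∪ symmDiff (outs a) (outs b)

/-- Free variables of an expression: `vars(α) = I(α) ∪ O(α)`. -/
def vars (α : FLIF ρ V D) : Finset V := inps α ∪ outs α

/-- `α` is io-disjoint: every subexpression `β` of `α` (including `α` itself)
satisfies `I(β) ∩ O(β) = ∅`. -/
def ioDisjoint : FLIF ρ V D → Prop
  | comp a b => ioDisjoint a ∧ ioDisjoint b ∧ inps (comp a b) ∩ outs (comp a b) = ∅
  | union a b => ioDisjoint a ∧ ioDisjoint b ∧ inps (union a b) ∩ outs (union a b) = ∅
  | diff a b => ioDisjoint a ∧ ioDisjoint b ∧ inps (diff a b) ∩ outs (diff a b) = ∅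
  | α => inps α ∩ outs α = ∅

end FLIF

namespace FLIF

variable {ρ V D : Type} [DecidableEq V]

lemma sem_eq_of_not_outs (I : ρ → Set (List D)) :
    ∀ (α : FLIF ρ V D) (ν₁ ν₂ : V → D), sem I α ν₁ ν₂ →
      ∀ v ∉ outs α, ν₁ v = ν₂ v := by
  intro α
  induction α with
  | rel R xs ys =>
    intro ν₁ ν₂ h v hv
    exact h.2 v (by simpa [outs] using hv)
  | eqVar x y => intro ν₁ ν₂ h v _; rw [h.1]
  | eqConst x c => intro ν₁ ν₂ h v _; rw [h.1]
  | assignVar x y =>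
    intro ν₁ ν₂ h v hv
    simp only [outs, Finset.mem_singleton] at hv
    rw [h, Function.update_of_ne hv]
  | assignConst x c =>
    intro ν₁ ν₂ h v hv
    simp only [outs, Finset.mem_singleton] at hv
    rw [h, Function.update_of_ne hv]
  | comp a b iha ihb =>
    intro ν₁ ν₂ h v hv
    obtain ⟨ν, ha, hb⟩ := h
    simp only [outs, Finset.mem_union, not_or] at hv
    rw [iha _ _ ha v hv.1, ihb _ _ hb v hv.2]
  | union a b iha ihb =>
    intro ν₁ ν₂ h v hv
    simp only [outs, Finset.mem_union, not_or] at hv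
    rcases h with h | h
    · exact iha _ _ h v hv.1
    · exact ihb _ _ h v hv.2
  | diff a b iha ihb =>
    intro ν₁ ν₂ h v hv
    exact iha _ _ h.1 v (by simpa [outs] using hv)

lemma mem_vars_comp_left {a b : FLIF ρ V D} {v : V} (h : v ∈ vars a) :
    v ∈ vars (comp a b) := by
  simp only [vars, inps, outs, Finset.mem_union, Finset.mem_sdiff] at *
  tauto

lemma mem_vars_comp_right {a b : FLIF ρ V D} {v : V} (h : v ∈ vars b) :
    v ∈ vars (comp a b) := by
  simp only [vars, inps, outs, Finset.mem_union, Finset.mem_sdiff] at *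
  tauto

lemma mem_vars_union_left {a b : FLIF ρ V D} {v : V} (h : v ∈ vars a) :
    v ∈ vars (union a b) := by
  simp only [vars, inps, outs, Finset.mem_union, Finset.mem_symmDiff] at *
  tauto

lemma mem_vars_union_right {a b : FLIF ρ V D} {v : V} (h : v ∈ vars b) :
    v ∈ vars (union a b) := by
  simp only [vars, inps, outs, Finset.mem_union, Finset.mem_symmDiff] at *
  tauto

lemma mem_vars_diff_left {a b : FLIF ρ V D} {v : V} (h : v ∈ vars a) :
    v ∈ vars (diff a b) := by
  simp only [vars, inps, outs, Finset.mem_union, Finset.mem_symmDiff] at *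
  tauto

lemma mem_vars_diff_right {a b : FLIF ρ V D} {v : V} (h : v ∈ vars b) :
    v ∈ vars (diff a b) := by
  simp only [vars, inps, outs, Finset.mem_union, Finset.mem_symmDiff] at *
  tauto

lemma outs_subset_vars {a : FLIF ρ V D} {v : V} (h : v ∈ outs a) : v ∈ vars a := by
  simp [vars, h]

end FLIF

/-- **Free variable property.** The semantics of `α` is cylindrical outside
`vars(α)`. -/
theorem free_variable_property {ρ V D : Type} [DecidableEq V] (I : ρ → Set (List D))
    (α : FLIF ρ V D) (ν₁ ν₂ ν₁' ν₂' : V → D)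
    (h : FLIF.sem I α ν₁ ν₂)
    (h₁ : ∀ v ∈ FLIF.vars α, ν₁' v = ν₁ v)
    (h₂ : ∀ v ∈ FLIF.vars α, ν₂' v = ν₂ v)
    (h₃ : ∀ v ∉ FLIF.vars α, ν₂' v = ν₁' v) :
    FLIF.sem I α ν₁' ν₂' := by
  open FLIF in
  induction α generalizing ν₁ ν₂ ν₁' ν₂' with
  | rel R xs ys =>
    obtain ⟨hmem, hout⟩ := h
    have hvx : ∀ v ∈ xs, v ∈ vars (rel (D := D) R xs ys) := by
      intro v hv; simp [vars, inps, hv]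
    have hvy : ∀ v ∈ ys, v ∈ vars (rel (D := D) R xs ys) := by
      intro v hv; simp [vars, outs, hv]
    constructor
    · have e1 : xs.map ν₁' = xs.map ν₁ :=
        List.map_congr_left fun v hv => h₁ v (hvx v hv)
      have e2 : ys.map ν₂' = ys.map ν₂ :=
        List.map_congr_left fun v hv => h₂ v (hvy v hv)
      rw [e1, e2]; exact hmem
    · intro v hv
      by_cases hvv : v ∈ vars (rel (D := D) R xs ys)
      · rw [h₁ v hvv, h₂ v hvv, hout v hv]
      · exact (h₃ v hvv).symm
  | eqVar x y =>
    have hx : x ∈ vars (eqVar (ρ := ρ) (D := D) x y) := by simp [vars, inps]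
    have hy : y ∈ vars (eqVar (ρ := ρ) (D := D) x y) := by simp [vars, inps]
    refine ⟨funext fun v => ?_, by rw [h₁ x hx, h₁ y hy, h.2]⟩
    by_cases hv : v ∈ vars (eqVar (ρ := ρ) (D := D) x y)
    · rw [h₁ v hv, h₂ v hv, h.1]
    · exact (h₃ v hv).symm
  | eqConst x c =>
    have hx : x ∈ vars (eqConst (ρ := ρ) x c) := by simp [vars, inps]
    refine ⟨funext fun v => ?_, by rw [h₁ x hx, h.2]⟩
    by_cases hv : v ∈ vars (eqConst (ρ := ρ) x c)
    · rw [h₁ v hv, h₂ v hv, h.1]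
    · exact (h₃ v hv).symm
  | assignVar x y =>
    have hx : x ∈ vars (assignVar (ρ := ρ) (D := D) x y) := by simp [vars, outs]
    have hy : y ∈ vars (assignVar (ρ := ρ) (D := D) x y) := by simp [vars, inps]
    funext v
    by_cases hvx : v = x
    · subst hvx
      rw [h₂ v hx, h, Function.update_self, Function.update_self, h₁ y hy]
    · rw [Function.update_of_ne hvx]
      by_cases hv : v ∈ vars (assignVar (ρ := ρ) (D := D) x y)
      · rw [h₂ v hv, h, Function.update_of_ne hvx, h₁ v hv]
      · exact h₃ v hv
  | assignConst x c =>
    have hx : x ∈ vars (assignConst (ρ := ρ) (V := V) x c) := by simp [vars, outs]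
    funext v
    by_cases hvx : v = x
    · subst hvx
      rw [h₂ v hx, h, Function.update_self, Function.update_self]
    · rw [Function.update_of_ne hvx]
      by_cases hv : v ∈ vars (assignConst (ρ := ρ) (V := V) x c)
      · rw [h₂ v hv, h, Function.update_of_ne hvx, h₁ v hv]
      · exact h₃ v hv
  | comp a b iha ihb =>
    obtain ⟨ν, ha, hb⟩ := h
    classical
    set ν' : V → D := fun v => if v ∈ vars (comp a b) then ν v else ν₁' v with hν'
    have hν'eq : ∀ v ∈ vars (comp a b), ν' v = ν v := fun v hv => by simp [hν', hv]
    have hν'eq' : ∀ v ∉ vars (comp a b), ν' v = ν₁' v := fun v hv => by simp [hν', hv]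
    refine ⟨ν', ?_, ?_⟩
    · refine iha ν₁ ν ν₁' ν' ha (fun v hv => h₁ v (mem_vars_comp_left hv))
        (fun v hv => hν'eq v (mem_vars_comp_left hv)) (fun v hv => ?_)
      by_cases hvc : v ∈ vars (comp a b)
      · rw [hν'eq v hvc, h₁ v hvc]
        exact (sem_eq_of_not_outs I a ν₁ ν ha v
          (fun hc => hv (outs_subset_vars hc))).symm
      · exact hν'eq' v hvc
    · refine ihb ν ν₂ ν' ν₂' hb (fun v hv => hν'eq v (mem_vars_comp_right hv))
        (fun v hv => h₂ v (mem_vars_comp_right hv)) (fun v hv => ?_)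
      by_cases hvc : v ∈ vars (comp a b)
      · rw [hν'eq v hvc, h₂ v hvc]
        exact (sem_eq_of_not_outs I b ν ν₂ hb v (fun hc => hv (outs_subset_vars hc))).symm
      · rw [hν'eq' v hvc, h₃ v hvc]
  | union a b iha ihb =>
    rcases h with h | h
    · left
      refine iha ν₁ ν₂ ν₁' ν₂' h (fun v hv => h₁ v (mem_vars_union_left hv))
        (fun v hv => h₂ v (mem_vars_union_left hv)) (fun v hv => ?_)
      by_cases hvc : v ∈ vars (union a b)
      · rw [h₁ v hvc, h₂ v hvc]
        exact (sem_eq_of_not_outs I a ν₁ ν₂ h v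
          (fun hc => hv (outs_subset_vars hc))).symm
      · exact h₃ v hvc
    · right
      refine ihb ν₁ ν₂ ν₁' ν₂' h (fun v hv => h₁ v (mem_vars_union_right hv))
        (fun v hv => h₂ v (mem_vars_union_right hv)) (fun v hv => ?_)
      by_cases hvc : v ∈ vars (union a b)
      · rw [h₁ v hvc, h₂ v hvc]
        exact (sem_eq_of_not_outs I b ν₁ ν₂ h v
          (fun hc => hv (outs_subset_vars hc))).symm
      · exact h₃ v hvc
  | diff a b iha ihb =>
    obtain ⟨ha, hnb⟩ := h
    constructor
    · refine iha ν₁ ν₂ ν₁' ν₂' ha (fun v hv => h₁ v (mem_vars_diff_left hv))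
        (fun v hv => h₂ v (mem_vars_diff_left hv)) (fun v hv => ?_)
      by_cases hvc : v ∈ vars (diff a b)
      · rw [h₁ v hvc, h₂ v hvc]
        exact (sem_eq_of_not_outs I a ν₁ ν₂ ha v
          (fun hc => hv (outs_subset_vars hc))).symm
      · exact h₃ v hvc
    · intro hb'
      apply hnb
      refine ihb ν₁' ν₂' ν₁ ν₂ hb'
        (fun v hv => (h₁ v (mem_vars_diff_right hv)).symm)
        (fun v hv => (h₂ v (mem_vars_diff_right hv)).symm)
        (fun v hv => ?_)
      by_cases hob : v ∈ outs b
      · exact absurd (outs_subset_vars hob) hv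
      · by_cases hoa : v ∈ outs a
        · have hva : v ∈ vars (diff a b) := outs_subset_vars (a := FLIF.diff a b)
            (by simpa [outs] using hoa)
          rw [← h₁ v hva, ← h₂ v hva]
          exact (sem_eq_of_not_outs I b ν₁' ν₂' hb' v hob).symm
        · exact (sem_eq_of_not_outs I a ν₁ ν₂ ha v hoa).symm
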